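/- For every integer n ≥ 1, the limit as x → ∞ of (∑_{m=1}^{⌊x⌋} (log m)^n / m − (log x)^{n+1}/(n+1)) exists. -/

import Mathlib

open Filter Real

namespace StieltjesAux

open Set MeasureTheory intervalIntegral

noncomputable def sf (n : ℕ) (t : ℝ) : ℝ := Real.log t ^ n / t

noncomputable def sF (n : ℕ) (t : ℝ) : ℝ := Real.log t ^ (n + 1) / (n + 1)

lemma sf_nonneg (n : ℕ) {t : ℝ} (ht : 1 ≤ t) : 0 ≤ sf n t :=
  div_nonneg (pow_nonneg (Real.log_nonneg ht) _) (by linarith)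

lemma hasDerivAt_sF (n : ℕ) {t : ℝ} (ht : 0 < t) : HasDerivAt (sF n) (sf n t) t := by
  have h := ((Real.hasDerivAt_log ht.ne').pow (n + 1)).div_const ((n : ℝ) + 1)
  have h' : HasDerivAt (sF n) ((((n + 1 : ℕ) : ℝ)) * Real.log t ^ (n + 1 - 1) * t⁻¹ / ((n : ℝ) + 1)) t := h
  convert h' using 1
  have hn1 : ((n : ℝ) + 1) ≠ 0 := by positivity
  simp only [sf, Nat.add_sub_cancel]
  push_cast
  field_simp

lemma sf_contOn (n : ℕ) {a : ℝ} (ha : 0 < a) : ContinuousOn (sf n) (Set.Ici a) := by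
  apply ContinuousOn.div
  · exact (Real.continuousOn_log.mono fun t ht => by
      simpa using (ha.trans_le ht).ne').pow n
  · exact continuousOn_id
  · exact fun t ht => (ha.trans_le ht).ne'

lemma sf_integrable (n : ℕ) {a b : ℝ} (ha : 0 < a) (hab : a ≤ b) :
    IntervalIntegrable (sf n) volume a b :=
  ((sf_contOn n ha).mono (by rw [Set.uIcc_of_le hab]; exact Set.Icc_subset_Ici_self)).intervalIntegrable

lemma integral_sf (n : ℕ) {a b : ℝ} (ha : 0 < a) (hab : a ≤ b) :
    ∫ t in a..b, sf n t = sF n b - sF n a := by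
  apply intervalIntegral.integral_eq_sub_of_hasDerivAt
  · intro t ht
    rw [Set.uIcc_of_le hab] at ht
    exact hasDerivAt_sF n (ha.trans_le ht.1)
  · exact sf_integrable n ha hab

lemma sf_anti (n : ℕ) (hn : 1 ≤ n) : AntitoneOn (sf n) (Set.Ici (Real.exp n)) := by
  have hexp : (0 : ℝ) < Real.exp n := Real.exp_pos _
  have key : ∀ t ∈ interior (Set.Ici (Real.exp n)),
      HasDerivAt (sf n) ((((n : ℝ) * Real.log t ^ (n - 1) * t⁻¹) * t - Real.log t ^ n * 1) / t ^ 2) t ∧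
      ((((n : ℝ) * Real.log t ^ (n - 1) * t⁻¹) * t - Real.log t ^ n * 1) / t ^ 2) ≤ 0 := by
    intro t ht
    rw [interior_Ici] at ht
    have ht0 : 0 < t := hexp.trans ht
    have hL : (n : ℝ) < Real.log t := by
      rw [← Real.log_exp (n : ℝ)]; exact Real.log_lt_log hexp ht
    have hL0 : 0 ≤ Real.log t := le_trans (by positivity) hL.le
    constructor
    · exact ((Real.hasDerivAt_log ht0.ne').pow n).div (hasDerivAt_id t) ht0.ne'
    · apply div_nonpos_of_nonpos_of_nonneg _ (by positivity)
      have hLn : Real.log t ^ n = Real.log t ^ (n - 1) * Real.log t := by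
        conv_lhs => rw [← Nat.sub_add_cancel hn, pow_succ]
      have he : (n : ℝ) * Real.log t ^ (n - 1) * t⁻¹ * t = (n : ℝ) * Real.log t ^ (n - 1) := by
        field_simp
      rw [he, hLn]
      have hA : 0 ≤ Real.log t ^ (n - 1) := pow_nonneg hL0 _
      nlinarith [mul_nonneg hA (sub_nonneg.2 hL.le)]
  apply antitoneOn_of_deriv_nonpos (convex_Ici _) (sf_contOn n hexp)
  · exact fun t ht => ((key t ht).1).differentiableAt.differentiableWithinAt
  · intro t ht
    rw [((key t ht).1).deriv]
    exact (key t ht).2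

lemma sf_tendsto (n : ℕ) : Tendsto (sf n) atTop (nhds 0) := by
  have := Real.tendsto_pow_log_div_mul_add_atTop 1 0 n one_ne_zero
  simp at this; exact this

end StieltjesAux

open StieltjesAux Set MeasureTheory intervalIntegral

/-- For every integer `n ≥ 1`, the limit as `x → ∞` of
`∑_{m=1}^{⌊x⌋} (log m)^n / m − (log x)^{n+1}/(n+1)` exists. -/
theorem stieltjes_limit_exists (n : ℕ) (hn : 1 ≤ n) :
    ∃ L : ℝ, Tendsto
      (fun x : ℝ => (∑ m ∈ Finset.Icc 1 ⌊x⌋₊, (Real.log m) ^ n / (m : ℝ))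
        - (Real.log x) ^ (n + 1) / (n + 1)) atTop (nhds L) := by
  set N₀ : ℕ := ⌈Real.exp n⌉₊ + 1 with hN₀def
  have hN₀e : Real.exp n ≤ (N₀ : ℝ) := by
    rw [hN₀def]; push_cast; linarith [Nat.le_ceil (Real.exp n)]
  have hN₀1 : 1 ≤ N₀ := Nat.le_add_left 1 _
  have hN₀1' : (1 : ℝ) ≤ (N₀ : ℝ) := by exact_mod_cast hN₀1
  have hN₀0 : (0 : ℝ) < (N₀ : ℝ) := by linarith
  have hanti := sf_anti n hn
  -- integral upper/lower bounds
  have hIub : ∀ a b : ℝ, Real.exp n ≤ a → a ≤ b →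
      ∫ t in a..b, sf n t ≤ sf n a * (b - a) := by
    intro a b ha hab
    have h := intervalIntegral.integral_mono_on hab
      (sf_integrable n ((Real.exp_pos _).trans_le ha) hab)
      (_root_.intervalIntegrable_const (c := sf n a))
      (fun t ht => hanti (Set.mem_Ici.2 ha) (Set.mem_Ici.2 (ha.trans ht.1)) ht.1)
    rw [intervalIntegral.integral_const, smul_eq_mul] at h
    linarith
  have hIlb : ∀ a b : ℝ, Real.exp n ≤ a → a ≤ b →
      sf n b * (b - a) ≤ ∫ t in a..b, sf n t := by
    intro a b ha hab
    have h := intervalIntegral.integral_mono_on hab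
      (_root_.intervalIntegrable_const (c := sf n b))
      (sf_integrable n ((Real.exp_pos _).trans_le ha) hab)
      (fun t ht => hanti (Set.mem_Ici.2 (ha.trans ht.1)) (Set.mem_Ici.2 (ha.trans hab)) ht.2)
    rw [intervalIntegral.integral_const, smul_eq_mul] at h
    linarith
  -- the sequence
  set g : ℕ → ℝ := fun N => (∑ m ∈ Finset.Icc 1 N, sf n (m : ℝ)) - sF n (N : ℝ) with hgdef
  have hstep : ∀ N : ℕ, N₀ ≤ N →
      g (N + 1) - g N = sf n ((N : ℝ) + 1) - ∫ t in (N : ℝ)..((N : ℝ) + 1), sf n t := by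
    intro N hN
    have hN1 : (1 : ℝ) ≤ (N : ℝ) := by exact_mod_cast hN₀1.trans hN
    have hsum : (∑ m ∈ Finset.Icc 1 (N + 1), sf n (m : ℝ))
        = (∑ m ∈ Finset.Icc 1 N, sf n (m : ℝ)) + sf n ((N : ℝ) + 1) := by
      rw [Finset.sum_Icc_succ_top (Nat.le_add_left 1 N)]
      push_cast
      ring
    have hint : ∫ t in (N : ℝ)..((N : ℝ) + 1), sf n t = sF n ((N : ℝ) + 1) - sF n (N : ℝ) :=
      integral_sf n (by linarith) (by linarith)
    simp only [hgdef, hsum, hint]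
    push_cast
    ring
  have hmemN : ∀ N : ℕ, N₀ ≤ N → Real.exp n ≤ (N : ℝ) := by
    intro N hN
    exact hN₀e.trans (by exact_mod_cast hN)
  set h : ℕ → ℝ := fun k => g (k + N₀) with hhdef
  have hanti' : Antitone h := by
    apply antitone_nat_of_succ_le
    intro k
    have h1 := hstep (k + N₀) (Nat.le_add_left _ _)
    have h2 := hIlb ((k + N₀ : ℕ) : ℝ) (((k + N₀ : ℕ) : ℝ) + 1)
      (hmemN _ (Nat.le_add_left _ _)) (by linarith)
    simp only [add_sub_cancel_left, mul_one] at h2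
    have : g (k + N₀ + 1) - g (k + N₀) ≤ 0 := by rw [h1]; linarith
    simp only [hhdef]
    have heq : k + 1 + N₀ = k + N₀ + 1 := by ring
    rw [heq]
    linarith
  have hlow : ∀ k : ℕ, h 0 + sf n ((k + N₀ : ℕ) : ℝ) - sf n (N₀ : ℝ) ≤ h k := by
    intro k
    induction k with
    | zero => simp
    | succ k ih =>
      have h1 := hstep (k + N₀) (Nat.le_add_left _ _)
      have h2 := hIub ((k + N₀ : ℕ) : ℝ) (((k + N₀ : ℕ) : ℝ) + 1)
        (hmemN _ (Nat.le_add_left _ _)) (by linarith)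
      simp only [add_sub_cancel_left, mul_one] at h2
      simp only [hhdef] at ih ⊢
      have heq : k + 1 + N₀ = k + N₀ + 1 := by omega
      rw [heq, Nat.cast_add_one]
      linarith
  have hbdd : BddBelow (Set.range h) := by
    refine ⟨h 0 - sf n (N₀ : ℝ), ?_⟩
    rintro _ ⟨k, rfl⟩
    have hks : 1 ≤ ((k + N₀ : ℕ) : ℝ) := by
      have : N₀ ≤ k + N₀ := Nat.le_add_left _ _
      exact_mod_cast hN₀1.trans this
    linarith [hlow k, sf_nonneg n hks]
  have hconv : Tendsto h atTop (nhds (⨅ k, h k)) := tendsto_atTop_ciInf hanti' hbdd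
  have hgconv : Tendsto g atTop (nhds (⨅ k, h k)) := by
    rw [← tendsto_add_atTop_iff_nat N₀]
    exact hconv
  -- the error term
  set E : ℝ → ℝ := fun x => sF n x - sF n ((⌊x⌋₊ : ℕ) : ℝ) with hEdef
  have hEbound : ∀ᶠ x : ℝ in atTop, 0 ≤ E x ∧ E x ≤ sf n ((⌊x⌋₊ : ℕ) : ℝ) := by
    filter_upwards [eventually_ge_atTop ((N₀ : ℝ) + 1)] with x hx
    have hx0 : (0 : ℝ) ≤ x := by linarith
    have hx1 : (1 : ℝ) ≤ x := by linarith
    have hfl : ((⌊x⌋₊ : ℕ) : ℝ) ≤ x := Nat.floor_le hx0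
    have hflN : (N₀ : ℝ) ≤ ((⌊x⌋₊ : ℕ) : ℝ) := by
      have : N₀ ≤ ⌊x⌋₊ := Nat.le_floor (by linarith)
      exact_mod_cast this
    have hfl1 : x ≤ ((⌊x⌋₊ : ℕ) : ℝ) + 1 := (Nat.lt_floor_add_one x).le
    have hflexp : Real.exp n ≤ ((⌊x⌋₊ : ℕ) : ℝ) := hN₀e.trans hflN
    have hE : E x = ∫ t in ((⌊x⌋₊ : ℕ) : ℝ)..x, sf n t := by
      rw [hEdef]
      rw [integral_sf n (by linarith) hfl]
    constructor
    · rw [hE]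
      have := hIlb _ _ hflexp hfl
      have hfx : 0 ≤ sf n x := sf_nonneg n hx1
      nlinarith
    · rw [hE]
      have := hIub _ _ hflexp hfl
      have hN1' : (1 : ℝ) ≤ ((⌊x⌋₊ : ℕ) : ℝ) := by linarith
      have hfN : 0 ≤ sf n ((⌊x⌋₊ : ℕ) : ℝ) := sf_nonneg n hN1'
      nlinarith
  have hE0 : Tendsto E atTop (nhds 0) := by
    have hfloor : Tendsto (fun x : ℝ => sf n ((⌊x⌋₊ : ℕ) : ℝ)) atTop (nhds 0) :=
      (sf_tendsto n).comp (tendsto_natCast_atTop_atTop.comp tendsto_nat_floor_atTop)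
    apply tendsto_of_tendsto_of_tendsto_of_le_of_le' tendsto_const_nhds hfloor
    · filter_upwards [hEbound] with x hx using hx.1
    · filter_upwards [hEbound] with x hx using hx.2
  -- assemble
  refine ⟨(⨅ k, h k) - 0, ?_⟩
  have hcomp : Tendsto (fun x : ℝ => g ⌊x⌋₊) atTop (nhds (⨅ k, h k)) :=
    hgconv.comp tendsto_nat_floor_atTop
  have := hcomp.sub hE0
  refine this.congr (fun x => ?_)
  simp only [hgdef, hEdef, sF, sf]
  ring
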